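/- Identifying two vertices lying in the same two-edge connected component of a graph T leaves the forest of two-edge connected components unchanged; identifying two vertices in distinct two-edge connected components corresponds to identifying the corresponding two vertices of the forest F(T), an operation that cannot increase the number of leaves. -/

import Mathlib

open scoped Classical

/-- A multigraph with edges indexed by `ι`; the `k`-th edge goes from
`(ends k).1` (source) to `(ends k).2` (target).  A *linear graph of order `K`*
in the sense of the paper is an `MGraph (Fin K)`. -/
structure MGraph (ι : Type) where
  V : Type
  [fintV : Fintype V]
  [decV : DecidableEq V]
  ends : ι → V × V

attribute [instance] MGraph.fintV MGraph.decV

namespace MGraph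

variable {ι : Type} [Fintype ι] [DecidableEq ι]

/-- Adjacency using only the edges in `s` (undirected). -/
def adjOn (G : MGraph ι) (s : Set ι) (v w : G.V) : Prop :=
  ∃ e ∈ s, G.ends e = (v, w) ∨ G.ends e = (w, v)

/-- Connectivity (as a setoid) of the subgraph with edge set `s`. -/
def reachSetoid (G : MGraph ι) (s : Set ι) : Setoid G.V :=
  ⟨Relation.EqvGen (G.adjOn s), Relation.EqvGen.is_equivalence _⟩

/-- Number of connected components of the subgraph with edge set `s`
(on the full vertex set). -/
noncomputable def ncomp (G : MGraph ι) (s : Set ι) : ℕ :=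
  Fintype.card (Quotient (G.reachSetoid s))

/-- A cutting edge (bridge): removing it increases the number of connected
components. -/
def IsBridge (G : MGraph ι) (e : ι) : Prop :=
  G.ncomp Set.univ < G.ncomp {x | x ≠ e}

/-- Two vertices are in the same two-edge connected component iff they are
connected using no cutting edge. -/
def tecSetoid (G : MGraph ι) : Setoid G.V := G.reachSetoid {e | ¬ G.IsBridge e}

/-- The forest of two-edge connected components: vertices are the two-edge
connected components, edges are the cutting edges. -/
noncomputable def forest (G : MGraph ι) : MGraph {e : ι // G.IsBridge e} where
  V := Quotient G.tecSetoid
  ends := fun e => (Quotient.mk _ (G.ends e.1).1, Quotient.mk _ (G.ends e.1).2)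

/-- Degree of a vertex (loops counted twice). -/
noncomputable def deg (G : MGraph ι) (v : G.V) : ℕ :=
  (Finset.univ.filter (fun e : ι => (G.ends e).1 = v)).card
  + (Finset.univ.filter (fun e : ι => (G.ends e).2 = v)).card

/-- Number of leaves, with the convention that an isolated vertex counts as
two leaves. -/
noncomputable def leafCount (G : MGraph ι) : ℕ :=
  ∑ v : G.V, if G.deg v = 0 then 2 else if G.deg v = 1 then 1 else 0

/-- `𝔏(G)`: the number of leaves of the forest of two-edge connected
components of `G` (an isolated two-edge connected component counts twice). -/
noncomputable def LL (G : MGraph ι) : ℕ := G.forest.leafCount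

/-- The quotient graph of `G` by a partition (setoid) of its vertex set. -/
noncomputable def quot (G : MGraph ι) (s : Setoid G.V) : MGraph ι where
  V := Quotient s
  ends := fun e => (Quotient.mk s (G.ends e).1, Quotient.mk s (G.ends e).2)

end MGraph

/-- The minimal linear graph `T₀` of order `K`: vertex set `[2K]` is encoded as
`Fin K ⊕ Fin K` (targets `1,…,K` on the left, sources `K+1,…,2K` on the
right), the `k`-th edge going from `K+k` to `k`. -/
def T0 (K : ℕ) : MGraph (Fin K) where
  V := Fin K ⊕ Fin K
  ends := fun k => (Sum.inr k, Sum.inl k)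

namespace MGraph

/-- The elementary linear form `Tr_{N,T}` of a linear graph `T` of order `K`,
evaluated on the elementary tensor `A₁ ⊗ ⋯ ⊗ A_K`. -/
noncomputable def gTrace {K : ℕ} (G : MGraph (Fin K)) (N : ℕ)
    (A : Fin K → Matrix (Fin N) (Fin N) ℂ) : ℂ :=
  ∑ φ : G.V → Fin N, ∏ k : Fin K, A k (φ (G.ends k).2) (φ (G.ends k).1)

/-- The injective linear form `Tr⁰_{N,T}`: only injective maps `φ : V → [N]`
are summed. -/
noncomputable def gTrace0 {K : ℕ} (G : MGraph (Fin K)) (N : ℕ)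
    (A : Fin K → Matrix (Fin N) (Fin N) ℂ) : ℂ :=
  ∑ φ : G.V → Fin N,
    if Function.Injective φ then ∏ k : Fin K, A k (φ (G.ends k).2) (φ (G.ends k).1) else 0

end MGraph

/-- All partitions of a finite set, as setoids. -/
noncomputable instance setoidFintype (V : Type*) [Fintype V] [DecidableEq V] :
    Fintype (Setoid V) :=
  Fintype.ofSurjective (fun g : V → V => Setoid.ker g)
    (fun s => ⟨fun v => (Quotient.mk s v).out, Setoid.ext fun x y => by
      constructor
      · intro h
        have h2 : Quotient.mk s x = Quotient.mk s y := by
          have hx := Quotient.out_eq (Quotient.mk s x)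
          have hy := Quotient.out_eq (Quotient.mk s y)
          rw [← hx, ← hy]
          exact congrArg (Quotient.mk s) h
        exact Quotient.exact h2
      · intro h
        show (Quotient.mk s x).out = (Quotient.mk s y).out
        rw [Quotient.sound h]⟩)

/-- An isomorphism of edge-indexed multigraphs: a bijection of vertices and a
bijection of edge indices compatible with sources and targets. -/
structure MGraphIso {ι κ : Type} (G : MGraph ι) (H : MGraph κ) where
  vequiv : G.V ≃ H.V
  eequiv : ι ≃ κ
  ends_eq : ∀ e, H.ends (eequiv e) = (vequiv (G.ends e).1, vequiv (G.ends e).2)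

/-- The partition identifying the two vertices `a` and `b` (and nothing
else). -/
def glueSetoid {V : Type*} (a b : V) : Setoid V :=
  ⟨Relation.EqvGen (fun x y => x = a ∧ y = b), Relation.EqvGen.is_equivalence _⟩


section EqvToolkit
variable {V : Type*}

/-- Setoid generated by a relation. -/
def es (r : V → V → Prop) : Setoid V :=
  ⟨Relation.EqvGen r, Relation.EqvGen.is_equivalence r⟩

theorem eqvGen_le {r q : V → V → Prop} (h : ∀ x y, r x y → Relation.EqvGen q x y) :
    ∀ {x y}, Relation.EqvGen r x y → Relation.EqvGen q x y := by
  intro x y hxy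
  induction hxy with
  | rel _ _ h' => exact h _ _ h'
  | refl => exact .refl _
  | symm _ _ _ ih => exact .symm _ _ ih
  | trans _ _ _ _ _ ih1 ih2 => exact .trans _ _ _ ih1 ih2

theorem eqvGen_eq_map {α : Type*} {r : V → V → Prop} {f : V → α}
    (h : ∀ x y, r x y → f x = f y) :
    ∀ {x y}, Relation.EqvGen r x y → f x = f y := by
  intro x y hxy
  induction hxy with
  | rel _ _ h' => exact h _ _ h'
  | refl => rfl
  | symm _ _ _ ih => exact ih.symm
  | trans _ _ _ _ _ ih1 ih2 => exact ih1.trans ih2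

/-- Descend map between quotients by generated setoids. -/
noncomputable def dmap {p q : V → V → Prop} (h : ∀ x y, p x y → Relation.EqvGen q x y) :
    Quotient (es p) → Quotient (es q) :=
  Quotient.lift (Quotient.mk (es q)) (fun _ _ hxy => Quotient.sound (eqvGen_le h hxy))

theorem dmap_mk {p q : V → V → Prop} (h : ∀ x y, p x y → Relation.EqvGen q x y) (v : V) :
    dmap h (Quotient.mk (es p) v) = Quotient.mk (es q) v := rfl

theorem dmap_surjective {p q : V → V → Prop} (h : ∀ x y, p x y → Relation.EqvGen q x y) :
    Function.Surjective (dmap h) := by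
  intro c
  induction c using Quotient.ind with
  | _ v => exact ⟨Quotient.mk _ v, rfl⟩

theorem card_le_dmap [Fintype V] {p q : V → V → Prop}
    (h : ∀ x y, p x y → Relation.EqvGen q x y) :
    Fintype.card (Quotient (es q)) ≤ Fintype.card (Quotient (es p)) :=
  Fintype.card_le_of_surjective _ (dmap_surjective h)

theorem card_eq_of_iff [Fintype V] {p q : V → V → Prop}
    (h : ∀ x y, Relation.EqvGen p x y ↔ Relation.EqvGen q x y) :
    Fintype.card (Quotient (es p)) = Fintype.card (Quotient (es q)) :=
  le_antisymm (card_le_dmap (fun x y hx => (h x y).mpr (Relation.EqvGen.rel _ _ hx)))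
    (card_le_dmap (fun x y hx => (h x y).mp (Relation.EqvGen.rel _ _ hx)))

theorem eqvGen_of_card [Fintype V] {p q : V → V → Prop}
    (hpq : ∀ x y, p x y → Relation.EqvGen q x y)
    (hc : Fintype.card (Quotient (es p)) ≤ Fintype.card (Quotient (es q))) :
    ∀ x y, Relation.EqvGen q x y → Relation.EqvGen p x y := by
  have hbij : Function.Bijective (dmap hpq) := by
    rw [Fintype.bijective_iff_surjective_and_card]
    exact ⟨dmap_surjective hpq, le_antisymm hc (card_le_dmap hpq)⟩
  intro x y hxy
  have : dmap hpq (Quotient.mk (es p) x) = dmap hpq (Quotient.mk (es p) y) := by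
    rw [dmap_mk, dmap_mk]; exact Quotient.sound hxy
  exact Quotient.exact (hbij.1 this)

/-- The relation induced on a quotient. -/
def liftRel (σ : Setoid V) (r : V → V → Prop) : Quotient σ → Quotient σ → Prop :=
  fun x y => ∃ u v, x = Quotient.mk σ u ∧ y = Quotient.mk σ v ∧ r u v

/-- Collapsing a quotient by `σ ⊔ r` into a quotient of a quotient. -/
noncomputable def collapseEquiv (σ : Setoid V) (r : V → V → Prop) :
    Quotient (es (fun x y => σ.r x y ∨ r x y)) ≃ Quotient (es (liftRel σ r)) where
  toFun := Quotient.lift (fun v => Quotient.mk (es (liftRel σ r)) (Quotient.mk σ v))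
    (by
      intro x y hxy
      refine eqvGen_eq_map (f := fun v => Quotient.mk (es (liftRel σ r)) (Quotient.mk σ v)) ?_
        (show Relation.EqvGen (fun x y => σ.r x y ∨ r x y) x y from hxy)
      intro x y h
      rcases h with h | h
      · show Quotient.mk _ (Quotient.mk σ x) = Quotient.mk _ (Quotient.mk σ y)
        rw [Quotient.sound h]
      · exact Quotient.sound (Relation.EqvGen.rel _ _ ⟨x, y, rfl, rfl, h⟩))
  invFun := Quotient.lift
    (Quotient.lift (Quotient.mk (es (fun x y => σ.r x y ∨ r x y)))
      (fun x y h => Quotient.sound (Relation.EqvGen.rel _ _ (Or.inl h))))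
    (by
      intro c d hcd
      refine eqvGen_eq_map ?_ (show Relation.EqvGen (liftRel σ r) c d from hcd)
      rintro c d ⟨u, v, rfl, rfl, huv⟩
      exact Quotient.sound (Relation.EqvGen.rel _ _ (Or.inr huv)))
  left_inv := by
    intro c; induction c using Quotient.ind with
    | _ v => rfl
  right_inv := by
    intro c
    induction c using Quotient.ind with
    | _ d =>
      induction d using Quotient.ind with
      | _ v => rfl

noncomputable def glueEquiv {x y : V} (hxy : x ≠ y) :
    {v : V // v ≠ y} ≃ Quotient (glueSetoid x y) where
  toFun v := Quotient.mk _ v.1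
  invFun := Quotient.lift
    (fun v => if h : v = y then (⟨x, hxy⟩ : {v : V // v ≠ y}) else ⟨v, h⟩)
    (by
      intro u v huv
      refine eqvGen_eq_map
        (f := fun v => if h : v = y then (⟨x, hxy⟩ : {v : V // v ≠ y}) else ⟨v, h⟩) ?_
        (show Relation.EqvGen (fun u v => u = x ∧ v = y) u v from huv)
      rintro u v ⟨rfl, rfl⟩
      simp [hxy])
  left_inv := by
    rintro ⟨v, hv⟩
    simp [hv]
  right_inv := by
    intro c
    induction c using Quotient.ind with
    | _ v =>
      show Quotient.mk _ ((if h : v = y then (⟨x, hxy⟩ : {v : V // v ≠ y}) else ⟨v, h⟩)).1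
        = Quotient.mk _ v
      split
      next h =>
        subst h
        exact Quotient.sound (Relation.EqvGen.rel _ _ ⟨rfl, rfl⟩)
      next h => rfl

theorem card_glue [Fintype V] {x y : V} (hxy : x ≠ y) :
    Fintype.card (Quotient (glueSetoid x y)) + 1 = Fintype.card V := by
  rw [← Fintype.card_congr (glueEquiv hxy)]
  have : Fintype.card {v : V // v = y} = 1 := Fintype.card_subtype_eq y
  have h2 := Fintype.card_congr (Equiv.sumCompl (fun v : V => v = y))
  rw [Fintype.card_sum, this] at h2
  have h3 : Fintype.card {v : V // v ≠ y} = Fintype.card {v : V // ¬ v = y} :=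
    Fintype.card_congr (Equiv.subtypeEquivRight fun _ => Iff.rfl)
  omega

end EqvToolkit
section Counting
variable {V : Type*}

theorem eqvGen_mem_iff {q : V → V → Prop} {A : Set V}
    (hq : ∀ x y, q x y → (x ∈ A ↔ y ∈ A)) :
    ∀ {x y}, Relation.EqvGen q x y → (x ∈ A ↔ y ∈ A) := by
  intro x y hxy
  induction hxy with
  | rel _ _ h' => exact hq _ _ h'
  | refl => exact Iff.rfl
  | symm _ _ _ ih => exact ih.symm
  | trans _ _ _ _ _ ih1 ih2 => exact ih1.trans ih2

theorem eqvGen_out {p q : V → V → Prop} {A : Set V}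
    (hq : ∀ x y, q x y → (x ∈ A ↔ y ∈ A))
    (hout : ∀ x y, q x y → (x ∉ A ∨ y ∉ A) → p x y) :
    ∀ {x y}, Relation.EqvGen q x y → (x ∉ A ∨ y ∉ A) → Relation.EqvGen p x y := by
  intro x y hxy
  induction hxy with
  | rel u v h' => exact fun hA => Relation.EqvGen.rel _ _ (hout _ _ h' hA)
  | refl => exact fun _ => Relation.EqvGen.refl _
  | symm u v h ih => exact fun hA => Relation.EqvGen.symm _ _ (ih hA.symm)
  | trans u v w huv hvw ih1 ih2 =>
    intro hA
    rcases hA with hA | hA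
    · have hv : v ∉ A := fun hv => hA ((eqvGen_mem_iff hq huv).mpr hv)
      exact Relation.EqvGen.trans _ _ _ (ih1 (Or.inl hA)) (ih2 (Or.inl hv))
    · have hv : v ∉ A := fun hv => hA ((eqvGen_mem_iff hq hvw).mp hv)
      exact Relation.EqvGen.trans _ _ _ (ih1 (Or.inr hv)) (ih2 (Or.inr hA))

variable (p q : V → V → Prop) (A : Set V)

/-- The classes meeting `A`. -/
def inP (r : V → V → Prop) (A : Set V) (c : Quotient (es r)) : Prop :=
  ∃ v ∈ A, Quotient.mk (es r) v = c

noncomputable def outEquiv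
    (hpq : ∀ x y, p x y → q x y)
    (hq : ∀ x y, q x y → (x ∈ A ↔ y ∈ A))
    (hout : ∀ x y, q x y → (x ∉ A ∨ y ∉ A) → p x y) :
    {c : Quotient (es p) // ¬ inP p A c} ≃ {c : Quotient (es q) // ¬ inP q A c} where
  toFun c := ⟨Quotient.mk (es q) c.1.out, by
    rintro ⟨v, hv, hveq⟩
    refine c.2 ⟨c.1.out, ?_, c.1.out_eq⟩
    exact (eqvGen_mem_iff hq (Quotient.exact hveq)).mp hv⟩
  invFun c := ⟨Quotient.mk (es p) c.1.out, by
    rintro ⟨v, hv, hveq⟩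
    refine c.2 ⟨c.1.out, ?_, c.1.out_eq⟩
    have : Relation.EqvGen q v c.1.out :=
      eqvGen_le (fun x y h => Relation.EqvGen.rel _ _ (hpq x y h)) (Quotient.exact hveq)
    exact (eqvGen_mem_iff hq this).mp hv⟩
  left_inv := by
    rintro ⟨c, hc⟩
    apply Subtype.ext
    show Quotient.mk (es p) (Quotient.mk (es q) c.out).out = c
    have h1 : Relation.EqvGen q (Quotient.mk (es q) c.out).out c.out :=
      Quotient.exact ((Quotient.mk (es q) c.out).out_eq)
    have h2 : c.out ∉ A := fun h => hc ⟨c.out, h, c.out_eq⟩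
    have := eqvGen_out hq hout h1 (Or.inr h2)
    exact (Quotient.sound this).trans c.out_eq
  right_inv := by
    rintro ⟨c, hc⟩
    apply Subtype.ext
    show Quotient.mk (es q) (Quotient.mk (es p) c.out).out = c
    have h1 : Relation.EqvGen p (Quotient.mk (es p) c.out).out c.out :=
      Quotient.exact ((Quotient.mk (es p) c.out).out_eq)
    have : Relation.EqvGen q (Quotient.mk (es p) c.out).out c.out :=
      eqvGen_le (fun x y h => Relation.EqvGen.rel _ _ (hpq x y h)) h1
    exact (Quotient.sound this).trans c.out_eq

theorem card_in_add [Fintype V]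
    (hpq : ∀ x y, p x y → q x y)
    (hq : ∀ x y, q x y → (x ∈ A ↔ y ∈ A))
    (hout : ∀ x y, q x y → (x ∉ A ∨ y ∉ A) → p x y) :
    Fintype.card (Quotient (es q)) + Fintype.card {c : Quotient (es p) // inP p A c}
      = Fintype.card (Quotient (es p)) + Fintype.card {c : Quotient (es q) // inP q A c} := by
  have e1 := Fintype.card_congr (Equiv.sumCompl (inP p A))
  have e2 := Fintype.card_congr (Equiv.sumCompl (inP q A))
  rw [Fintype.card_sum] at e1 e2
  have e3 := Fintype.card_congr (outEquiv p q A hpq hq hout)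
  omega

end Counting

section Numeric

def cfun (n : ℕ) : ℕ := if n = 0 then 2 else if n = 1 then 1 else 0

theorem cfun_min (n : ℕ) : min n 2 + cfun n = 2 := by
  rcases n with _ | _ | n <;> simp [cfun]

theorem numeric {γ : Type*} (s : Finset γ) (β δ : γ → ℕ) (hne : s.Nonempty)
    (hd : (∑ x ∈ s, δ x) + 2 ≤ 2 * s.card) :
    cfun (∑ x ∈ s, β x) ≤ ∑ x ∈ s, cfun (β x + δ x) := by
  by_cases hβ : 2 ≤ ∑ x ∈ s, β x
  · have : cfun (∑ x ∈ s, β x) = 0 := by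
      rcases Nat.exists_eq_add_of_le hβ with ⟨k, hk⟩
      rw [hk]; simp [cfun]; omega
    simp [this]
  · push_neg at hβ
    have h1 : ∀ x ∈ s, min (β x + δ x) 2 + cfun (β x + δ x) = 2 := fun x _ => cfun_min _
    have h2 : (∑ x ∈ s, min (β x + δ x) 2) + (∑ x ∈ s, cfun (β x + δ x)) = 2 * s.card := by
      rw [← Finset.sum_add_distrib]
      rw [Finset.sum_congr rfl h1]
      simp [Finset.sum_const, mul_comm]
    have h3 : (∑ x ∈ s, min (β x + δ x) 2) ≤ (∑ x ∈ s, β x) + (∑ x ∈ s, δ x) := by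
      rw [← Finset.sum_add_distrib]
      exact Finset.sum_le_sum (fun x _ => min_le_left _ _)
    have h4 : cfun (∑ x ∈ s, β x) ≤ 2 := by
      rcases (∑ x ∈ s, β x) with _ | _ | n <;> simp [cfun]
    interval_cases h : (∑ x ∈ s, β x) <;> simp [cfun] at * <;> omega

end Numeric

namespace MGraph
variable {ι : Type} [Fintype ι] [DecidableEq ι] (T : MGraph ι)

theorem adjOn_mono' {s t : Set ι} (h : s ⊆ t) {x y : T.V} (ha : T.adjOn s x y) :
    T.adjOn t x y := by
  obtain ⟨e, he, hends⟩ := ha; exact ⟨e, h he, hends⟩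

theorem reach_mono {s t : Set ι} (h : s ⊆ t) {x y : T.V}
    (hr : Relation.EqvGen (T.adjOn s) x y) : Relation.EqvGen (T.adjOn t) x y :=
  eqvGen_le (fun _ _ ha => Relation.EqvGen.rel _ _ (T.adjOn_mono' h ha)) hr

theorem ncomp_eq_card (s : Set ι) :
    T.ncomp s = Fintype.card (Quotient (es (T.adjOn s))) := rfl

theorem ncomp_mono {s t : Set ι} (h : s ⊆ t) : T.ncomp t ≤ T.ncomp s := by
  rw [ncomp_eq_card, ncomp_eq_card]
  exact card_le_dmap (fun x y ha => Relation.EqvGen.rel _ _ (T.adjOn_mono' h ha))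

theorem adjOn_quot {σ : Setoid T.V} {s : Set ι} {x y : T.V} (h : T.adjOn s x y) :
    (T.quot σ).adjOn s (Quotient.mk σ x) (Quotient.mk σ y) := by
  obtain ⟨e, he, hends | hends⟩ := h
  · exact ⟨e, he, Or.inl (by show (_, _) = _; rw [hends]; rfl)⟩
  · exact ⟨e, he, Or.inr (by show (_, _) = _; rw [hends]; rfl)⟩

theorem reach_quot {σ : Setoid T.V} {s : Set ι} {x y : T.V}
    (h : Relation.EqvGen (T.adjOn s) x y) :
    Relation.EqvGen ((T.quot σ).adjOn s) (Quotient.mk σ x) (Quotient.mk σ y) := by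
  induction h with
  | rel _ _ h' => exact Relation.EqvGen.rel _ _ (T.adjOn_quot h')
  | refl => exact Relation.EqvGen.refl _
  | symm _ _ _ ih => exact Relation.EqvGen.symm _ _ ih
  | trans _ _ _ _ _ ih1 ih2 => exact Relation.EqvGen.trans _ _ _ ih1 ih2

theorem adjOn_quot_elim {σ : Setoid T.V} {s : Set ι} {x y : Quotient σ}
    (h : (T.quot σ).adjOn s x y) :
    ∃ e ∈ s, (x = Quotient.mk σ (T.ends e).1 ∧ y = Quotient.mk σ (T.ends e).2) ∨
             (x = Quotient.mk σ (T.ends e).2 ∧ y = Quotient.mk σ (T.ends e).1) := by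
  obtain ⟨e, he, hends | hends⟩ := h
  · exact ⟨e, he, Or.inl ⟨(congrArg Prod.fst hends).symm, (congrArg Prod.snd hends).symm⟩⟩
  · exact ⟨e, he, Or.inr ⟨(congrArg Prod.snd hends).symm, (congrArg Prod.fst hends).symm⟩⟩

/-- Push-down map always exists and is surjective: quotient graph has fewer components. -/
theorem ncomp_quot_le (σ : Setoid T.V) (s : Set ι) : (T.quot σ).ncomp s ≤ T.ncomp s := by
  have hresp : ∀ x y : T.V, Relation.EqvGen (T.adjOn s) x y →
      Quotient.mk ((T.quot σ).reachSetoid s) (Quotient.mk σ x)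
        = Quotient.mk ((T.quot σ).reachSetoid s) (Quotient.mk σ y) := by
    intro x y h
    exact Quotient.sound (T.reach_quot h)
  refine Fintype.card_le_of_surjective
    (Quotient.lift (fun v => Quotient.mk ((T.quot σ).reachSetoid s) (Quotient.mk σ v))
      (fun x y h => hresp x y h)) ?_
  intro c
  induction c using Quotient.ind with
  | _ d =>
    induction d using Quotient.ind with
    | _ v => exact ⟨Quotient.mk (T.reachSetoid s) v, rfl⟩

/-- If `a` and `b` are already connected in `(T, s)`, gluing them does not change
the components of `(T, s)`. -/
noncomputable def quotReachEquiv (a b : T.V) (s : Set ι)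
    (hab : Relation.EqvGen (T.adjOn s) a b) :
    Quotient ((T.quot (glueSetoid a b)).reachSetoid s) ≃ Quotient (T.reachSetoid s) where
  toFun := Quotient.lift
    (Quotient.lift (Quotient.mk (T.reachSetoid s))
      (fun x y hxy =>
        eqvGen_eq_map (f := Quotient.mk (T.reachSetoid s))
          (by rintro x y ⟨rfl, rfl⟩; exact Quotient.sound hab)
          (show Relation.EqvGen (fun x y => x = a ∧ y = b) x y from hxy)))
    (by
      intro c d hcd
      refine eqvGen_eq_map (f := Quotient.lift (Quotient.mk (T.reachSetoid s)) _) ?_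
        (show Relation.EqvGen ((T.quot (glueSetoid a b)).adjOn s) c d from hcd)
      intro c d hcd'
      obtain ⟨e, he, ⟨rfl, rfl⟩ | ⟨rfl, rfl⟩⟩ := T.adjOn_quot_elim hcd'
      · exact Quotient.sound (Relation.EqvGen.rel _ _ ⟨e, he, Or.inl rfl⟩)
      · exact Quotient.sound (Relation.EqvGen.symm _ _ (Relation.EqvGen.rel _ _ ⟨e, he, Or.inl rfl⟩)))
  invFun := Quotient.lift
    (fun v => Quotient.mk ((T.quot (glueSetoid a b)).reachSetoid s) (Quotient.mk (glueSetoid a b) v))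
    (fun x y h => Quotient.sound (T.reach_quot h))
  left_inv := by
    intro c
    induction c using Quotient.ind with
    | _ d =>
      induction d using Quotient.ind with
      | _ v => rfl
  right_inv := by
    intro c
    induction c using Quotient.ind with
    | _ v => rfl

theorem ncomp_quot_eq (a b : T.V) (s : Set ι) (hab : Relation.EqvGen (T.adjOn s) a b) :
    (T.quot (glueSetoid a b)).ncomp s = T.ncomp s :=
  Fintype.card_congr (T.quotReachEquiv a b s hab)

theorem bridge_sep {e : ι} (hb : T.IsBridge e) :
    ¬ Relation.EqvGen (T.adjOn {x | x ≠ e}) (T.ends e).1 (T.ends e).2 := by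
  intro hcon
  have hiff : ∀ x y, Relation.EqvGen (T.adjOn Set.univ) x y ↔
      Relation.EqvGen (T.adjOn {x | x ≠ e}) x y := by
    intro x y
    constructor
    · refine eqvGen_le ?_
      rintro x y ⟨f, -, hends⟩
      by_cases hf : f = e
      · subst hf
        rcases hends with h | h
        · have h1 : (T.ends f).1 = x := by rw [h]
          have h2 : (T.ends f).2 = y := by rw [h]
          rw [← h1, ← h2]; exact hcon
        · have h1 : (T.ends f).1 = y := by rw [h]
          have h2 : (T.ends f).2 = x := by rw [h]
          rw [← h1, ← h2]; exact Relation.EqvGen.symm _ _ hcon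
      · exact Relation.EqvGen.rel _ _ ⟨f, hf, hends⟩
    · refine eqvGen_le ?_
      rintro x y ⟨f, -, hends⟩
      exact Relation.EqvGen.rel _ _ ⟨f, trivial, hends⟩
  have hcard : T.ncomp Set.univ = T.ncomp {x | x ≠ e} := by
    rw [ncomp_eq_card, ncomp_eq_card]; exact card_eq_of_iff hiff
  exact absurd hb (by unfold IsBridge; omega)

theorem nonbridge_reach {e : ι} (h : ¬ T.IsBridge e) {x y : T.V}
    (hr : Relation.EqvGen (T.adjOn Set.univ) x y) :
    Relation.EqvGen (T.adjOn {x | x ≠ e}) x y := by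
  refine eqvGen_of_card (p := T.adjOn {x | x ≠ e}) (q := T.adjOn Set.univ) ?_ ?_ x y hr
  · intro x y ha
    exact Relation.EqvGen.rel _ _ (T.adjOn_mono' (fun f _ => trivial) ha)
  · have h1 : T.ncomp Set.univ ≤ T.ncomp {x | x ≠ e} := T.ncomp_mono (fun f _ => trivial)
    have h2 : ¬ (T.ncomp Set.univ < T.ncomp {x | x ≠ e}) := h
    rw [ncomp_eq_card, ncomp_eq_card] at *
    omega

theorem add_edge {s : Set ι} {e : ι}
    (hsep : ¬ Relation.EqvGen (T.adjOn s) (T.ends e).1 (T.ends e).2) :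
    T.ncomp (s ∪ {e}) + 1 = T.ncomp s := by
  set σ := T.reachSetoid s with hσ
  set u₁ := (T.ends e).1
  set u₂ := (T.ends e).2
  have h1 : ∀ x y, Relation.EqvGen (T.adjOn (s ∪ {e})) x y ↔
      Relation.EqvGen (fun x y => σ.r x y ∨ (x = u₁ ∧ y = u₂)) x y := by
    intro x y
    constructor
    · refine eqvGen_le ?_
      rintro x y ⟨f, hf, hends⟩
      rcases hf with hf | hf
      · exact Relation.EqvGen.rel _ _ (Or.inl (Relation.EqvGen.rel _ _ ⟨f, hf, hends⟩))
      · rcases hf with rfl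
        rcases hends with h | h
        · have h1 : x = u₁ := (congrArg Prod.fst h).symm
          have h2 : y = u₂ := (congrArg Prod.snd h).symm
          exact Relation.EqvGen.rel _ _ (Or.inr ⟨h1, h2⟩)
        · have h1 : y = u₁ := (congrArg Prod.fst h).symm
          have h2 : x = u₂ := (congrArg Prod.snd h).symm
          exact Relation.EqvGen.symm _ _ (Relation.EqvGen.rel _ _ (Or.inr ⟨h1, h2⟩))
    · refine eqvGen_le ?_
      rintro x y (h | ⟨rfl, rfl⟩)
      · exact T.reach_mono Set.subset_union_left h
      · exact Relation.EqvGen.rel _ _ ⟨e, Or.inr rfl, Or.inl rfl⟩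
  have h2 : T.ncomp (s ∪ {e})
      = Fintype.card (Quotient (es (fun x y => σ.r x y ∨ (x = u₁ ∧ y = u₂)))) := by
    rw [ncomp_eq_card]; exact card_eq_of_iff h1
  have h3 : Fintype.card (Quotient (es (fun x y => σ.r x y ∨ (x = u₁ ∧ y = u₂))))
      = Fintype.card (Quotient (es (liftRel σ (fun x y => x = u₁ ∧ y = u₂)))) :=
    Fintype.card_congr (collapseEquiv σ _)
  have h4 : ∀ x y, Relation.EqvGen (liftRel σ (fun x y => x = u₁ ∧ y = u₂)) x y ↔
      Relation.EqvGen (fun x y : Quotient σ =>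
        x = Quotient.mk σ u₁ ∧ y = Quotient.mk σ u₂) x y := by
    intro x y
    constructor
    · refine eqvGen_le ?_
      rintro x y ⟨u, v, rfl, rfl, rfl, rfl⟩
      exact Relation.EqvGen.rel _ _ ⟨rfl, rfl⟩
    · refine eqvGen_le ?_
      rintro x y ⟨rfl, rfl⟩
      exact Relation.EqvGen.rel _ _ ⟨u₁, u₂, rfl, rfl, rfl, rfl⟩
  have h5 := card_eq_of_iff h4
  have hne : (Quotient.mk σ u₁ : Quotient σ) ≠ Quotient.mk σ u₂ :=
    fun h => hsep (Quotient.exact h)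
  have h6 := card_glue hne
  have h7 : Fintype.card (Quotient (glueSetoid (Quotient.mk σ u₁) (Quotient.mk σ u₂)))
      = Fintype.card (Quotient (es (fun x y : Quotient σ =>
          x = Quotient.mk σ u₁ ∧ y = Quotient.mk σ u₂))) := rfl
  have h8 : T.ncomp s = Fintype.card (Quotient σ) := rfl
  omega

theorem indep (S : Finset ι) (hS : ∀ e ∈ S, T.IsBridge e) :
    T.ncomp ({e | ¬ T.IsBridge e} ∪ ↑S) + S.card = T.ncomp {e | ¬ T.IsBridge e} := by
  classical
  induction S using Finset.induction_on with
  | empty => simp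
  | @insert e S he ih =>
    have hbe : T.IsBridge e := hS e (Finset.mem_insert_self e S)
    have hset : {e' | ¬ T.IsBridge e'} ∪ ↑(insert e S)
        = ({e' | ¬ T.IsBridge e'} ∪ ↑S) ∪ {e} := by
      ext f
      simp only [Finset.coe_insert, Set.mem_union, Set.mem_insert_iff, Set.mem_setOf_eq,
        Set.mem_singleton_iff, Finset.mem_coe]
      tauto
    have hsub : {e' | ¬ T.IsBridge e'} ∪ ↑S ⊆ {x | x ≠ e} := by
      rintro f (hf | hf)
      · intro hfe; subst hfe; exact hf hbe
      · intro hfe; subst hfe; exact he hf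
    have hsep : ¬ Relation.EqvGen (T.adjOn ({e' | ¬ T.IsBridge e'} ∪ ↑S))
        (T.ends e).1 (T.ends e).2 :=
      fun h => T.bridge_sep hbe (T.reach_mono hsub h)
    have hadd := T.add_edge hsep
    rw [hset, Finset.card_insert_of_notMem he]
    have := ih (fun f hf => hS f (Finset.mem_insert_of_mem hf))
    omega

end MGraph

namespace MGraph
variable {ι : Type} [Fintype ι] [DecidableEq ι] (T : MGraph ι)

theorem quot_bridge_iff {a b : T.V} (hab : T.tecSetoid.r a b) (e : ι) :
    (T.quot (glueSetoid a b)).IsBridge e ↔ T.IsBridge e := by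
  have habr : Relation.EqvGen (T.adjOn {e | ¬ T.IsBridge e}) a b := hab
  by_cases hbe : T.IsBridge e
  · have h1 : (T.quot (glueSetoid a b)).ncomp Set.univ = T.ncomp Set.univ :=
      T.ncomp_quot_eq a b _ (T.reach_mono (fun f _ => trivial) habr)
    have hsub : {f : ι | ¬ T.IsBridge f} ⊆ {x | x ≠ e} := by
      intro f hf hfe
      exact hf (hfe ▸ hbe)
    have h2 : (T.quot (glueSetoid a b)).ncomp {x | x ≠ e} = T.ncomp {x | x ≠ e} :=
      T.ncomp_quot_eq a b _ (T.reach_mono hsub habr)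
    unfold IsBridge
    rw [h1, h2]
  · have h1 : (T.quot (glueSetoid a b)).ncomp Set.univ = T.ncomp Set.univ :=
      T.ncomp_quot_eq a b _ (T.reach_mono (fun f _ => trivial) habr)
    have h2 : T.ncomp Set.univ ≤ T.ncomp {x | x ≠ e} := T.ncomp_mono (fun f _ => trivial)
    have h3 : ¬ (T.ncomp Set.univ < T.ncomp {x | x ≠ e}) := hbe
    have h4 : (T.quot (glueSetoid a b)).ncomp {x | x ≠ e} ≤ T.ncomp {x | x ≠ e} :=
      T.ncomp_quot_le _ _
    have h5 : (T.quot (glueSetoid a b)).ncomp Set.univ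
        ≤ (T.quot (glueSetoid a b)).ncomp {x | x ≠ e} :=
      (T.quot (glueSetoid a b)).ncomp_mono (fun f _ => trivial)
    unfold IsBridge
    omega

noncomputable def forestIso {a b : T.V} (hab : T.tecSetoid.r a b) :
    MGraphIso ((T.quot (glueSetoid a b)).forest) T.forest where
  vequiv :=
  { toFun := Quotient.lift
      (Quotient.lift (Quotient.mk T.tecSetoid)
        (fun x y hxy => eqvGen_eq_map (f := Quotient.mk T.tecSetoid)
          (by rintro x y ⟨rfl, rfl⟩; exact Quotient.sound hab)
          (show Relation.EqvGen (fun x y => x = a ∧ y = b) x y from hxy)))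
      (by
        intro c d hcd
        refine eqvGen_eq_map (f := Quotient.lift (Quotient.mk T.tecSetoid) _) ?_
          (show Relation.EqvGen
            ((T.quot (glueSetoid a b)).adjOn {e | ¬ (T.quot (glueSetoid a b)).IsBridge e})
            c d from hcd)
        intro c d hcd'
        obtain ⟨e, he, h⟩ := T.adjOn_quot_elim hcd'
        have heT : e ∈ {e : ι | ¬ T.IsBridge e} :=
          fun hb => he ((T.quot_bridge_iff hab e).mpr hb)
        rcases h with ⟨rfl, rfl⟩ | ⟨rfl, rfl⟩
        · exact Quotient.sound (Relation.EqvGen.rel _ _ ⟨e, heT, Or.inl rfl⟩)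
        · exact Quotient.sound
            (Relation.EqvGen.symm _ _ (Relation.EqvGen.rel _ _ ⟨e, heT, Or.inl rfl⟩)))
    invFun := Quotient.lift
      (fun v => Quotient.mk ((T.quot (glueSetoid a b)).tecSetoid) (Quotient.mk (glueSetoid a b) v))
      (by
        intro x y hxy
        refine eqvGen_eq_map
          (f := fun v => Quotient.mk ((T.quot (glueSetoid a b)).tecSetoid)
            (Quotient.mk (glueSetoid a b) v)) ?_
          (show Relation.EqvGen (T.adjOn {e | ¬ T.IsBridge e}) x y from hxy)
        rintro x y ⟨e, he, hends⟩
        have he' : e ∈ {e : ι | ¬ (T.quot (glueSetoid a b)).IsBridge e} :=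
          fun hb => he ((T.quot_bridge_iff hab e).mp hb)
        exact Quotient.sound (Relation.EqvGen.rel _ _ (T.adjOn_quot ⟨e, he', hends⟩)))
    left_inv := by
      intro c
      induction c using Quotient.ind with
      | _ d =>
        induction d using Quotient.ind with
        | _ v => rfl
    right_inv := by
      intro c
      induction c using Quotient.ind with
      | _ v => rfl }
  eequiv := Equiv.subtypeEquivRight (fun e => T.quot_bridge_iff hab e)
  ends_eq := fun e => rfl

end MGraph

section FilterHelpers
variable {α : Type*} [Fintype α]

theorem filter_subtype_card (p q : α → Prop) :
    ((Finset.univ : Finset {e : α // p e}).filter (fun e => q e.1)).card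
      = (Finset.univ.filter (fun e : α => p e ∧ q e)).card := by
  classical
  rw [← Fintype.card_subtype, ← Fintype.card_subtype]
  exact Fintype.card_congr (Equiv.subtypeSubtypeEquivSubtypeInter p q)

theorem filter_card_congr {p q : α → Prop} [DecidablePred p] [DecidablePred q]
    (h : ∀ e, p e ↔ q e) :
    (Finset.univ.filter p).card = (Finset.univ.filter q).card := by
  classical
  rw [← Fintype.card_subtype, ← Fintype.card_subtype]
  exact Fintype.card_congr (Equiv.subtypeEquivRight h)

/-- Cardinality of the set of elements satisfying `p`, instance-free. -/
noncomputable def fcard (p : α → Prop) : ℕ := Nat.card {x : α // p x}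

theorem filtercard_eq_natcard (p : α → Prop) [DecidablePred p] :
    (Finset.univ.filter p).card = Nat.card {x : α // p x} :=
  (Nat.card_eq_fintype_card.trans (Fintype.card_subtype p)).symm

theorem fcard_eq (p : α → Prop) [DecidablePred p] :
    (Finset.univ.filter p).card = fcard p :=
  filtercard_eq_natcard p

theorem fcard_congr {p q : α → Prop} (h : ∀ e, p e ↔ q e) : fcard p = fcard q :=
  Nat.card_congr (Equiv.subtypeEquivRight h)

theorem card_split (p q P : α → Prop) (hqp : ∀ e, q e → p e) :
    fcard (fun e => p e ∧ P e)
      = fcard (fun e => q e ∧ P e)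
      + fcard (fun e => (p e ∧ ¬ q e) ∧ P e) := by
  classical
  simp only [fcard]
  rw [← Nat.card_sum]
  refine Nat.card_congr ?_
  refine
    { toFun := fun e => if h : q e.1 then Sum.inl ⟨e.1, h, e.2.2⟩
        else Sum.inr ⟨e.1, ⟨e.2.1, h⟩, e.2.2⟩
      invFun := Sum.elim (fun e => ⟨e.1, hqp _ e.2.1, e.2.2⟩) (fun e => ⟨e.1, e.2.1.1, e.2.2⟩)
      left_inv := ?_
      right_inv := ?_ }
  · intro e
    dsimp only
    split
    · rfl
    · rfl
  · rintro (e | e)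
    · simp only [Sum.elim_inl]
      exact dif_pos e.2.1
    · simp only [Sum.elim_inr]
      exact dif_neg e.2.1.2

end FilterHelpers

namespace MGraph
variable {ι : Type} [Fintype ι] [DecidableEq ι] (T : MGraph ι)

theorem forest_deg (x : Quotient T.tecSetoid) :
    T.forest.deg x
      = fcard (fun e : ι => T.IsBridge e ∧ Quotient.mk T.tecSetoid (T.ends e).1 = x)
      + fcard (fun e : ι => T.IsBridge e ∧ Quotient.mk T.tecSetoid (T.ends e).2 = x) := by
  simp only [deg, fcard]
  rw [filtercard_eq_natcard, filtercard_eq_natcard]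
  exact congrArg₂ (· + ·)
    (Nat.card_congr (Equiv.subtypeSubtypeEquivSubtypeInter (fun e : ι => T.IsBridge e)
      (fun e => Quotient.mk T.tecSetoid (T.ends e).1 = x)))
    (Nat.card_congr (Equiv.subtypeSubtypeEquivSubtypeInter (fun e : ι => T.IsBridge e)
      (fun e => Quotient.mk T.tecSetoid (T.ends e).2 = x)))

theorem quot_nonbridge (a b : T.V) {e : ι} (h : ¬ T.IsBridge e) :
    ¬ (T.quot (glueSetoid a b)).IsBridge e := by
  set T' := T.quot (glueSetoid a b) with hT'
  have hiff : ∀ x y, Relation.EqvGen (T'.adjOn Set.univ) x y ↔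
      Relation.EqvGen (T'.adjOn {x | x ≠ e}) x y := by
    intro x y
    constructor
    · refine eqvGen_le ?_
      intro x y hxy
      obtain ⟨f, -, hends⟩ := hxy
      by_cases hfe : f = e
      · subst hfe
        have hTreach : Relation.EqvGen (T.adjOn {x | x ≠ f}) (T.ends f).1 (T.ends f).2 :=
          T.nonbridge_reach h (Relation.EqvGen.rel _ _ ⟨f, trivial, Or.inl rfl⟩)
        have hQ : Relation.EqvGen (T'.adjOn {x | x ≠ f})
            (Quotient.mk (glueSetoid a b) (T.ends f).1)
            (Quotient.mk (glueSetoid a b) (T.ends f).2) := T.reach_quot hTreach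
        rcases hends with hh | hh
        · have hx : (T'.ends f).1 = x := congrArg Prod.fst hh
          have hy : (T'.ends f).2 = y := congrArg Prod.snd hh
          rw [← hx, ← hy]
          exact hQ
        · have hx : (T'.ends f).1 = y := congrArg Prod.fst hh
          have hy : (T'.ends f).2 = x := congrArg Prod.snd hh
          rw [← hx, ← hy]
          exact Relation.EqvGen.symm _ _ hQ
      · exact Relation.EqvGen.rel _ _ ⟨f, hfe, hends⟩
    · refine eqvGen_le ?_
      rintro x y ⟨f, -, hends⟩
      exact Relation.EqvGen.rel _ _ ⟨f, trivial, hends⟩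
  have hcard : T'.ncomp Set.univ = T'.ncomp {x | x ≠ e} := by
    rw [ncomp_eq_card, ncomp_eq_card]
    exact card_eq_of_iff hiff
  unfold IsBridge
  omega

end MGraph

namespace MGraph
variable {ι : Type} [Fintype ι] [DecidableEq ι] (T : MGraph ι)

theorem LL_quot_le (a b : T.V) : (T.quot (glueSetoid a b)).LL ≤ T.LL := by
  classical
  set T' := T.quot (glueSetoid a b) with hT'
  have hlive : ∀ e : ι, T'.IsBridge e → T.IsBridge e := by
    intro e he
    by_contra h
    exact T.quot_nonbridge a b h he
  -- the projection between the two forests' vertex sets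
  have hπresp : ∀ x y : T.V, Relation.EqvGen (T.adjOn {e | ¬ T.IsBridge e}) x y →
      Quotient.mk T'.tecSetoid (Quotient.mk (glueSetoid a b) x)
        = Quotient.mk T'.tecSetoid (Quotient.mk (glueSetoid a b) y) := by
    intro x y h
    refine Quotient.sound (T.reach_quot (s := {e | ¬ T'.IsBridge e}) ?_)
    refine T.reach_mono ?_ h
    intro f hf hbf
    exact hf (hlive f hbf)
  set π : Quotient T.tecSetoid → Quotient T'.tecSetoid :=
    Quotient.lift (fun v => Quotient.mk T'.tecSetoid (Quotient.mk (glueSetoid a b) v)) hπresp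
    with hπdef
  have hπsurj : Function.Surjective π := by
    intro c
    induction c using Quotient.ind with
    | _ d =>
      induction d using Quotient.ind with
      | _ v => exact ⟨Quotient.mk T.tecSetoid v, rfl⟩
  have hdead : ∀ e : ι, ¬ T'.IsBridge e →
      π (Quotient.mk T.tecSetoid (T.ends e).1)
        = π (Quotient.mk T.tecSetoid (T.ends e).2) := by
    intro e he
    show Quotient.mk T'.tecSetoid _ = Quotient.mk T'.tecSetoid _
    exact Quotient.sound
      (Relation.EqvGen.rel _ _ (T.adjOn_quot (σ := glueSetoid a b) ⟨e, he, Or.inl rfl⟩))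
  -- the key per-fibre counting inequality
  have hcore : ∀ x' : Quotient T'.tecSetoid,
      fcard (fun e : ι => (T.IsBridge e ∧ ¬ T'.IsBridge e)
          ∧ π (Quotient.mk T.tecSetoid (T.ends e).1) = x') + 1
        ≤ (Finset.univ.filter (fun x : Quotient T.tecSetoid => π x = x')).card := by
    intro x'
    set Sf : Finset ι := Finset.univ.filter (fun e : ι => (T.IsBridge e ∧ ¬ T'.IsBridge e)
        ∧ π (Quotient.mk T.tecSetoid (T.ends e).1) = x') with hSf
    set A : Set T.V := {v | π (Quotient.mk T.tecSetoid v) = x'} with hA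
    set N : Set ι := {e | ¬ T.IsBridge e} with hN
    have hSmem : ∀ e, e ∈ Sf ↔ ((T.IsBridge e ∧ ¬ T'.IsBridge e)
        ∧ π (Quotient.mk T.tecSetoid (T.ends e).1) = x') := by
      intro e
      rw [hSf]
      simp
    have hSfcard : Sf.card = fcard (fun e : ι => (T.IsBridge e ∧ ¬ T'.IsBridge e)
        ∧ π (Quotient.mk T.tecSetoid (T.ends e).1) = x') := by
      rw [hSf]
      exact fcard_eq _
    have hendA : ∀ e ∈ Sf, (T.ends e).1 ∈ A ∧ (T.ends e).2 ∈ A := by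
      intro e he
      obtain ⟨⟨hb, hnb⟩, hx⟩ := (hSmem e).mp he
      refine ⟨hx, ?_⟩
      show π (Quotient.mk T.tecSetoid (T.ends e).2) = x'
      rw [← hdead e hnb]
      exact hx
    have hq_cl : ∀ x y, T.adjOn (N ∪ ↑Sf) x y → (x ∈ A ↔ y ∈ A) := by
      rintro x y ⟨e, he, hends⟩
      rcases he with he | he
      · have hxy : Quotient.mk T.tecSetoid x = Quotient.mk T.tecSetoid y :=
          Quotient.sound (Relation.EqvGen.rel _ _ ⟨e, he, hends⟩)
        constructor
        · intro h
          show π (Quotient.mk T.tecSetoid y) = x'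
          rw [← hxy]
          exact h
        · intro h
          show π (Quotient.mk T.tecSetoid x) = x'
          rw [hxy]
          exact h
      · obtain ⟨h1, h2⟩ := hendA e he
        rcases hends with h | h
        · have hx : (T.ends e).1 = x := by rw [h]
          have hy : (T.ends e).2 = y := by rw [h]
          exact iff_of_true (hx ▸ h1) (hy ▸ h2)
        · have hx : (T.ends e).2 = x := by rw [h]
          have hy : (T.ends e).1 = y := by rw [h]
          exact iff_of_true (hx ▸ h2) (hy ▸ h1)
    have hout : ∀ x y, T.adjOn (N ∪ ↑Sf) x y → (x ∉ A ∨ y ∉ A) → T.adjOn N x y := by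
      rintro x y ⟨e, he, hends⟩ hn
      rcases he with he | he
      · exact ⟨e, he, hends⟩
      · exfalso
        obtain ⟨h1, h2⟩ := hendA e he
        rcases hends with h | h
        · have hx : (T.ends e).1 = x := by rw [h]
          have hy : (T.ends e).2 = y := by rw [h]
          rcases hn with hn | hn
          · exact hn (hx ▸ h1)
          · exact hn (hy ▸ h2)
        · have hx : (T.ends e).2 = x := by rw [h]
          have hy : (T.ends e).1 = y := by rw [h]
          rcases hn with hn | hn
          · exact hn (hx ▸ h2)
          · exact hn (hy ▸ h1)
    have hpq : ∀ x y, T.adjOn N x y → T.adjOn (N ∪ ↑Sf) x y :=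
      fun x y h => T.adjOn_mono' Set.subset_union_left h
    have hkey := card_in_add (T.adjOn N) (T.adjOn (N ∪ ↑Sf)) A hpq hq_cl hout
    have hindep := T.indep Sf (fun e he => ((hSmem e).mp he).1.1)
    rw [← hN] at hindep
    have hQp : T.ncomp N = Fintype.card (Quotient (es (T.adjOn N))) := T.ncomp_eq_card N
    have hQq : T.ncomp (N ∪ ↑Sf) = Fintype.card (Quotient (es (T.adjOn (N ∪ ↑Sf)))) :=
      T.ncomp_eq_card _
    have hinp : Fintype.card {c : Quotient (es (T.adjOn N)) // inP (T.adjOn N) A c}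
        = (Finset.univ.filter (fun x : Quotient T.tecSetoid => π x = x')).card := by
      rw [← Fintype.card_subtype]
      refine Fintype.card_congr (Equiv.subtypeEquivRight ?_)
      intro c
      constructor
      · rintro ⟨v, hv, rfl⟩
        exact hv
      · intro h
        induction c using Quotient.ind with
        | _ v => exact ⟨v, h, rfl⟩
    have hinq : 1 ≤ Fintype.card
        {c : Quotient (es (T.adjOn (N ∪ ↑Sf))) // inP (T.adjOn (N ∪ ↑Sf)) A c} := by
      obtain ⟨c, hc⟩ := hπsurj x'
      have hcA : c.out ∈ A := by
        show π (Quotient.mk T.tecSetoid c.out) = x'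
        rw [c.out_eq]
        exact hc
      refine Fintype.card_pos_iff.mpr ⟨⟨Quotient.mk _ c.out, c.out, hcA, rfl⟩⟩
    omega
  -- degree bookkeeping
  set β : Quotient T.tecSetoid → ℕ := fun x =>
    fcard (fun e : ι => T'.IsBridge e ∧ Quotient.mk T.tecSetoid (T.ends e).1 = x)
    + fcard (fun e : ι => T'.IsBridge e ∧ Quotient.mk T.tecSetoid (T.ends e).2 = x) with hβdef
  set δ : Quotient T.tecSetoid → ℕ := fun x =>
    fcard (fun e : ι => (T.IsBridge e ∧ ¬ T'.IsBridge e)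
      ∧ Quotient.mk T.tecSetoid (T.ends e).1 = x)
    + fcard (fun e : ι => (T.IsBridge e ∧ ¬ T'.IsBridge e)
      ∧ Quotient.mk T.tecSetoid (T.ends e).2 = x) with hδdef
  have hdegT : ∀ x : Quotient T.tecSetoid, T.forest.deg x = β x + δ x := by
    intro x
    rw [T.forest_deg x, hβdef, hδdef]
    have h1 := card_split (fun e : ι => T.IsBridge e) (fun e => T'.IsBridge e)
      (fun e => Quotient.mk T.tecSetoid (T.ends e).1 = x) hlive
    have h2 := card_split (fun e : ι => T.IsBridge e) (fun e => T'.IsBridge e)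
      (fun e => Quotient.mk T.tecSetoid (T.ends e).2 = x) hlive
    beta_reduce at h1 h2 ⊢
    omega
  have hfibcount : ∀ (P : ι → Prop) (c : ι → T.V) (x' : Quotient T'.tecSetoid),
      fcard (fun e : ι => P e ∧ π (Quotient.mk T.tecSetoid (c e)) = x')
        = ∑ x ∈ Finset.univ.filter (fun x : Quotient T.tecSetoid => π x = x'),
            fcard (fun e : ι => P e ∧ Quotient.mk T.tecSetoid (c e) = x) := by
    intro P c x'
    simp only [fcard, ← filtercard_eq_natcard]
    rw [Finset.card_eq_sum_card_fiberwise (f := fun e => Quotient.mk T.tecSetoid (c e))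
      (t := Finset.univ.filter (fun x : Quotient T.tecSetoid => π x = x'))
      (fun e he => by
        simp only [Finset.mem_filter, Finset.mem_univ, true_and] at he ⊢
        exact Finset.mem_coe.mpr (Finset.mem_filter.mpr ⟨Finset.mem_univ _, (Finset.mem_filter.mp he).2.2⟩))]
    refine Finset.sum_congr rfl ?_
    intro x hx
    simp only [Finset.mem_filter, Finset.mem_univ, true_and] at hx
    rw [Finset.filter_filter]
    refine filter_card_congr ?_
    intro e
    constructor
    · rintro ⟨⟨hP, -⟩, hc⟩
      exact ⟨hP, hc⟩
    · rintro ⟨hP, hc⟩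
      exact ⟨⟨hP, by rw [hc, hx]⟩, hc⟩
  have hdeg' : ∀ x' : Quotient T'.tecSetoid,
      T'.forest.deg x'
        = ∑ x ∈ Finset.univ.filter (fun x : Quotient T.tecSetoid => π x = x'), β x := by
    intro x'
    rw [T'.forest_deg x']
    have e1 : fcard (fun e : ι => T'.IsBridge e
          ∧ Quotient.mk T'.tecSetoid (T'.ends e).1 = x')
        = fcard (fun e : ι => T'.IsBridge e
          ∧ π (Quotient.mk T.tecSetoid (T.ends e).1) = x') :=
      fcard_congr (fun e => Iff.rfl)
    have e2 : fcard (fun e : ι => T'.IsBridge e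
          ∧ Quotient.mk T'.tecSetoid (T'.ends e).2 = x')
        = fcard (fun e : ι => T'.IsBridge e
          ∧ π (Quotient.mk T.tecSetoid (T.ends e).2) = x') :=
      fcard_congr (fun e => Iff.rfl)
    have f1 := hfibcount (fun e => T'.IsBridge e) (fun e => (T.ends e).1) x'
    have f2 := hfibcount (fun e => T'.IsBridge e) (fun e => (T.ends e).2) x'
    beta_reduce at f1 f2
    rw [e1, e2, f1, f2, ← Finset.sum_add_distrib]
  have hδsum : ∀ x' : Quotient T'.tecSetoid,
      (∑ x ∈ Finset.univ.filter (fun x : Quotient T.tecSetoid => π x = x'), δ x)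
        = 2 * fcard (fun e : ι => (T.IsBridge e ∧ ¬ T'.IsBridge e)
            ∧ π (Quotient.mk T.tecSetoid (T.ends e).1) = x') := by
    intro x'
    have h1 := hfibcount (fun e => T.IsBridge e ∧ ¬ T'.IsBridge e) (fun e => (T.ends e).1) x'
    have h2 := hfibcount (fun e => T.IsBridge e ∧ ¬ T'.IsBridge e) (fun e => (T.ends e).2) x'
    beta_reduce at h1 h2
    have h3 : fcard (fun e : ι => (T.IsBridge e ∧ ¬ T'.IsBridge e)
          ∧ π (Quotient.mk T.tecSetoid (T.ends e).2) = x')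
        = fcard (fun e : ι => (T.IsBridge e ∧ ¬ T'.IsBridge e)
          ∧ π (Quotient.mk T.tecSetoid (T.ends e).1) = x') := by
      refine fcard_congr ?_
      intro e
      constructor
      · rintro ⟨hd, h⟩
        exact ⟨hd, by rw [hdead e hd.2]; exact h⟩
      · rintro ⟨hd, h⟩
        exact ⟨hd, by rw [← hdead e hd.2]; exact h⟩
    have h4 : (∑ x ∈ Finset.univ.filter (fun x : Quotient T.tecSetoid => π x = x'), δ x)
        = (∑ x ∈ Finset.univ.filter (fun x : Quotient T.tecSetoid => π x = x'),
            fcard (fun e : ι => (T.IsBridge e ∧ ¬ T'.IsBridge e)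
              ∧ Quotient.mk T.tecSetoid (T.ends e).1 = x))
          + (∑ x ∈ Finset.univ.filter (fun x : Quotient T.tecSetoid => π x = x'),
            fcard (fun e : ι => (T.IsBridge e ∧ ¬ T'.IsBridge e)
              ∧ Quotient.mk T.tecSetoid (T.ends e).2 = x)) := by
      rw [← Finset.sum_add_distrib]
    omega
  -- conclusion
  have hmain : ∀ x' : Quotient T'.tecSetoid,
      cfun (T'.forest.deg x')
        ≤ ∑ x ∈ Finset.univ.filter (fun x : Quotient T.tecSetoid => π x = x'),
            cfun (T.forest.deg x) := by
    intro x'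
    have hc := hcore x'
    have hne : (Finset.univ.filter (fun x : Quotient T.tecSetoid => π x = x')).Nonempty := by
      rw [← Finset.card_pos]
      omega
    have hd : (∑ x ∈ Finset.univ.filter (fun x : Quotient T.tecSetoid => π x = x'), δ x) + 2
        ≤ 2 * (Finset.univ.filter (fun x : Quotient T.tecSetoid => π x = x')).card := by
      rw [hδsum x']
      omega
    have hnum := numeric _ β δ hne hd
    rw [hdeg' x']
    refine le_trans hnum ?_
    refine le_of_eq (Finset.sum_congr rfl ?_)
    intro x _
    rw [hdegT x]
  have hL' : T'.LL = ∑ x' : Quotient T'.tecSetoid, cfun (T'.forest.deg x') := rfl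
  have hL : T.LL = ∑ x : Quotient T.tecSetoid, cfun (T.forest.deg x) := rfl
  rw [hL', hL]
  refine le_trans (Finset.sum_le_sum (fun x' _ => hmain x')) (le_of_eq ?_)
  exact Finset.sum_fiberwise_of_maps_to (fun x _ => Finset.mem_univ (π x)) _

end MGraph

/-- Identifying two vertices `a, b` lying in the same two-edge connected
component of `T` leaves the forest of two-edge connected components unchanged
(up to isomorphism); identifying two vertices in distinct two-edge connected
components cannot increase the number of leaves `𝔏`. -/
theorem glue_vertices_forest (ι : Type) [Fintype ι] [DecidableEq ι]
    (T : MGraph ι) (a b : T.V) :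
    (T.tecSetoid.r a b →
      Nonempty (MGraphIso ((T.quot (glueSetoid a b)).forest) T.forest)) ∧
    (¬ T.tecSetoid.r a b → (T.quot (glueSetoid a b)).LL ≤ T.LL) := by
  constructor
  · intro hab
    exact ⟨T.forestIso hab⟩
  · intro _
    exact T.LL_quot_le a b
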